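/- If a finite simple graph G contains no induced subgraph isomorphic to the house, the domino, or the gem, and contains no induced chordless cycle C_n with n ≥ 5 (no hole), then G is distance-hereditary. (Direction (iii) ⇒ (i) of the Bandelt–Mulder characterization, Theorem 1.) -/

import Mathlib

open SimpleGraph

/-- `G` is distance-hereditary: in every connected induced subgraph,
distances agree with those in `G`. -/
def DistanceHereditary {V : Type*} (G : SimpleGraph V) : Prop :=
  ∀ S : Set V, (G.induce S).Connected →
    ∀ u v : S, (G.induce S).dist u v = G.dist u.1 v.1

/-- `G` contains `H` as an induced subgraph: there is an injection of the
vertices of `H` into those of `G` preserving adjacency and non-adjacency. -/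
def ContainsInduced {α β : Type*} (H : SimpleGraph α) (G : SimpleGraph β) : Prop :=
  ∃ f : α → β, Function.Injective f ∧ ∀ a b : α, H.Adj a b ↔ G.Adj (f a) (f b)

/-- The house: vertices a,b,c,d,e = 0,1,2,3,4; edges ab,bc,cd,ad,ae,be. -/
def house : SimpleGraph (Fin 5) :=
  SimpleGraph.fromEdgeSet {s(0,1), s(1,2), s(2,3), s(0,3), s(0,4), s(1,4)}

/-- The gem: vertices a,b,c,d,e = 0,1,2,3,4; edges ab,bc,cd,ae,be,ce,de. -/
def gem : SimpleGraph (Fin 5) :=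
  SimpleGraph.fromEdgeSet {s(0,1), s(1,2), s(2,3), s(0,4), s(1,4), s(2,4), s(3,4)}

/-- The domino: vertices a,b,c,d,e,h = 0,1,2,3,4,5; edges ab,bc,cd,ad,be,eh,ch. -/
def domino : SimpleGraph (Fin 6) :=
  SimpleGraph.fromEdgeSet {s(0,1), s(1,2), s(2,3), s(0,3), s(1,4), s(4,5), s(2,5)}

/-- `G` is (house, hole, domino, gem)-free. A hole is an induced `C_n`, `n ≥ 5`. -/
def HHDGFree {V : Type*} (G : SimpleGraph V) : Prop :=
  ¬ ContainsInduced house G ∧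
  (∀ n : ℕ, 5 ≤ n → ¬ ContainsInduced (SimpleGraph.cycleGraph n) G) ∧
  ¬ ContainsInduced domino G ∧
  ¬ ContainsInduced gem G

/-- A stable (independent) set: pairwise non-adjacent vertices. -/
def IsStableSet {V : Type*} (G : SimpleGraph V) (s : Set V) : Prop :=
  s.Pairwise fun a b => ¬ G.Adj a b

/-- `T` is a cycle-transversal of `G`: every cycle of `G` contains a vertex of `T`. -/
def IsCycleTransversal {V : Type*} (G : SimpleGraph V) (T : Set V) : Prop :=
  ∀ ⦃v : V⦄ (c : G.Walk v v), c.IsCycle → ∃ w ∈ c.support, w ∈ T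

/-- A clique cycle-transversal (cct): a cycle-transversal that is a clique. -/
def IsCCT {V : Type*} (G : SimpleGraph V) (T : Set V) : Prop :=
  G.IsClique T ∧ IsCycleTransversal G T

namespace HHDGAux

variable {V : Type*} {G : SimpleGraph V}

set_option maxHeartbeats 2000000 in
lemma contains_house (a b c d e : V)
    (Aab : G.Adj a b) (Abc : G.Adj b c) (Acd : G.Adj c d) (Aad : G.Adj a d)
    (Aae : G.Adj a e) (Abe : G.Adj b e)
    (Nac : ¬ G.Adj a c) (Nbd : ¬ G.Adj b d) (Nce : ¬ G.Adj c e) (Nde : ¬ G.Adj d e) :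
    ContainsInduced house G := by
  have hac : a ≠ c := fun hx => Nce (hx ▸ Aae)
  have hbd : b ≠ d := fun hx => Nde (hx ▸ Abe)
  have hce : c ≠ e := fun hx => Nde ((hx ▸ Acd).symm)
  have hde : d ≠ e := fun hx => Nce (hx ▸ Acd)
  refine ⟨![a,b,c,d,e], ?_, ?_⟩
  · intro x y hxy
    fin_cases x <;> fin_cases y <;>
      simp_all [Aab.ne, Abc.ne, Acd.ne, Aad.ne, Aae.ne, Abe.ne,
        Aab.ne', Abc.ne', Acd.ne', Aad.ne', Aae.ne', Abe.ne']
  · intro x y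
    fin_cases x <;> fin_cases y <;>
      simp only [Matrix.cons_val_zero, Matrix.cons_val_one, Matrix.head_cons,
        Matrix.cons_val_two, Matrix.tail_cons, Matrix.cons_val_three, Matrix.cons_val_four,
        Matrix.cons_val_fin_one, Matrix.head_fin_const] <;>
      simp only [house, fromEdgeSet_adj, Set.mem_insert_iff, Set.mem_singleton_iff,
        Sym2.eq_iff, ne_eq] <;>
      first
        | (refine iff_of_true (by decide) ?_
           first
            | exact Aab | exact Abc | exact Acd | exact Aad | exact Aae | exact Abe
            | exact Aab.symm | exact Abc.symm | exact Acd.symm | exact Aad.symm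
            | exact Aae.symm | exact Abe.symm)
        | (refine iff_of_false (by decide) ?_
           first
            | exact Nac | exact Nbd | exact Nce | exact Nde
            | exact G.loopless.irrefl _
            | (intro hx; first
                | exact Nac hx.symm | exact Nbd hx.symm | exact Nce hx.symm
                | exact Nde hx.symm))

set_option maxHeartbeats 2000000 in
lemma contains_gem (a b c d e : V)
    (Aab : G.Adj a b) (Abc : G.Adj b c) (Acd : G.Adj c d)
    (Aae : G.Adj a e) (Abe : G.Adj b e) (Ace : G.Adj c e) (Ade : G.Adj d e)
    (Nac : ¬ G.Adj a c) (Nad : ¬ G.Adj a d) (Nbd : ¬ G.Adj b d) :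
    ContainsInduced gem G := by
  have hac : a ≠ c := fun hx => Nad (hx ▸ Acd)
  have had : a ≠ d := fun hx => Nac ((hx ▸ Acd).symm)
  have hbd : b ≠ d := fun hx => Nad (hx ▸ Aab)
  refine ⟨![a,b,c,d,e], ?_, ?_⟩
  · intro x y hxy
    fin_cases x <;> fin_cases y <;>
      simp_all [Aab.ne, Abc.ne, Acd.ne, Aae.ne, Abe.ne, Ace.ne, Ade.ne,
        Aab.ne', Abc.ne', Acd.ne', Aae.ne', Abe.ne', Ace.ne', Ade.ne']
  · intro x y
    fin_cases x <;> fin_cases y <;>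
      simp only [Matrix.cons_val_zero, Matrix.cons_val_one, Matrix.head_cons,
        Matrix.cons_val_two, Matrix.tail_cons, Matrix.cons_val_three, Matrix.cons_val_four,
        Matrix.cons_val_fin_one, Matrix.head_fin_const] <;>
      simp only [gem, fromEdgeSet_adj, Set.mem_insert_iff, Set.mem_singleton_iff,
        Sym2.eq_iff, ne_eq] <;>
      first
        | (refine iff_of_true (by decide) ?_
           first
            | exact Aab | exact Abc | exact Acd | exact Aae | exact Abe | exact Ace | exact Ade
            | exact Aab.symm | exact Abc.symm | exact Acd.symm | exact Aae.symm
            | exact Abe.symm | exact Ace.symm | exact Ade.symm)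
        | (refine iff_of_false (by decide) ?_
           first
            | exact Nac | exact Nad | exact Nbd
            | exact G.loopless.irrefl _
            | (intro hx; first
                | exact Nac hx.symm | exact Nad hx.symm | exact Nbd hx.symm))

set_option maxHeartbeats 2000000 in
lemma contains_domino (a b c d e h : V)
    (Aab : G.Adj a b) (Abc : G.Adj b c) (Acd : G.Adj c d) (Aad : G.Adj a d)
    (Abe : G.Adj b e) (Aeh : G.Adj e h) (Ach : G.Adj c h)
    (Nac : ¬ G.Adj a c) (Nae : ¬ G.Adj a e) (Nah : ¬ G.Adj a h) (Nbd : ¬ G.Adj b d)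
    (Nbh : ¬ G.Adj b h) (Nce : ¬ G.Adj c e) (Nde : ¬ G.Adj d e) (Ndh : ¬ G.Adj d h) :
    ContainsInduced domino G := by
  have hac : a ≠ c := fun hx => Nah (hx ▸ Ach)
  have hae : a ≠ e := fun hx => Nde ((hx ▸ Aad).symm)
  have hah : a ≠ h := fun hx => Nbh ((hx ▸ Aab).symm)
  have hbd : b ≠ d := fun hx => Nde (hx ▸ Abe)
  have hbh : b ≠ h := fun hx => Nah (hx ▸ Aab)
  have hce : c ≠ e := fun hx => Nde ((hx ▸ Acd).symm)
  have hde : d ≠ e := fun hx => Nae (hx ▸ Aad)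
  have hdh : d ≠ h := fun hx => Nah (hx ▸ Aad)
  have e5 : ![a,b,c,d,e,h] 5 = h := rfl
  refine ⟨![a,b,c,d,e,h], ?_, ?_⟩
  · intro x y hxy
    fin_cases x <;> fin_cases y <;>
      simp_all [e5, Aab.ne, Abc.ne, Acd.ne, Aad.ne, Abe.ne, Aeh.ne, Ach.ne,
        Aab.ne', Abc.ne', Acd.ne', Aad.ne', Abe.ne', Aeh.ne', Ach.ne']
  · intro x y
    fin_cases x <;> fin_cases y <;>
      simp only [e5, Matrix.cons_val_zero, Matrix.cons_val_one, Matrix.head_cons,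
        Matrix.cons_val_two, Matrix.tail_cons, Matrix.cons_val_three, Matrix.cons_val_four,
        Matrix.cons_val_fin_one, Matrix.head_fin_const] <;>
      simp only [domino, fromEdgeSet_adj, Set.mem_insert_iff, Set.mem_singleton_iff,
        Sym2.eq_iff, ne_eq] <;>
      first
        | (refine iff_of_true (by decide) ?_
           first
            | exact Aab | exact Abc | exact Acd | exact Aad | exact Abe | exact Aeh | exact Ach
            | exact Aab.symm | exact Abc.symm | exact Acd.symm | exact Aad.symm
            | exact Abe.symm | exact Aeh.symm | exact Ach.symm)
        | (refine iff_of_false (by decide) ?_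
           first
            | exact Nac | exact Nae | exact Nah | exact Nbd | exact Nbh | exact Nce
            | exact Nde | exact Ndh
            | exact G.loopless.irrefl _
            | (intro hx; first
                | exact Nac hx.symm | exact Nae hx.symm | exact Nah hx.symm
                | exact Nbd hx.symm | exact Nbh hx.symm | exact Nce hx.symm
                | exact Nde hx.symm | exact Ndh hx.symm))



variable {V : Type*} {G : SimpleGraph V}

lemma fin_sub_val_eq_one {n : ℕ} (hn : 2 ≤ n) (a b : Fin n) :
    (a - b).val = 1 ↔ (a.val = b.val + 1 ∨ (b.val = n - 1 ∧ a.val = 0)) := by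
  have hs : (a - b).val = (n - b.val + a.val) % n := by rw [Fin.sub_def]
  have ha : a.val < n := a.isLt
  have hb : b.val < n := b.isLt
  have key : (n - b.val + a.val) % n = 1 ↔ (a.val = b.val + 1 ∨ (b.val = n - 1 ∧ a.val = 0)) := by
    rcases le_or_gt b.val a.val with hab | hab
    · have hh : n - b.val + a.val = n + (a.val - b.val) := by omega
      rw [hh, Nat.add_mod_left, Nat.mod_eq_of_lt (by omega)]
      omega
    · rw [Nat.mod_eq_of_lt (by omega)]
      omega
  rw [hs, key]

lemma cycle_adj_iff {n : ℕ} (hn : 3 ≤ n) (a b : Fin n) :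
    (cycleGraph n).Adj a b ↔
      (a.val + 1 = b.val ∨ b.val + 1 = a.val ∨
       (a.val = 0 ∧ b.val = n - 1) ∨ (b.val = 0 ∧ a.val = n - 1)) := by
  rw [cycleGraph_adj', fin_sub_val_eq_one (by omega), fin_sub_val_eq_one (by omega)]
  constructor
  · rintro (h | h) <;> omega
  · intro h; omega

set_option maxHeartbeats 1000000 in
lemma hole_glue (p qc : ℕ) (hp : 1 ≤ p) (hq : 1 ≤ qc) (h5 : 5 ≤ p + qc)
    (u w : ℕ → V)
    (hui : ∀ ⦃i j⦄, i < p → j < p → u i = u j → i = j)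
    (hwi : ∀ ⦃i j⦄, i < qc → j < qc → w i = w j → i = j)
    (huw : ∀ ⦃i j⦄, i < p → j < qc → u i ≠ w j)
    (hua : ∀ ⦃i⦄, i + 1 < p → G.Adj (u i) (u (i+1)))
    (hwa : ∀ ⦃i⦄, i + 1 < qc → G.Adj (w i) (w (i+1)))
    (hun : ∀ ⦃i j⦄, j < p → i + 1 < j → ¬ G.Adj (u i) (u j))
    (hwn : ∀ ⦃i j⦄, j < qc → i + 1 < j → ¬ G.Adj (w i) (w j))
    (he1 : G.Adj (u (p-1)) (w 0))
    (he2 : G.Adj (w (qc-1)) (u 0))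
    (hcross : ∀ ⦃i j⦄, i < p → j < qc → ¬(i = p-1 ∧ j = 0) → ¬(i = 0 ∧ j = qc-1) →
      ¬ G.Adj (u i) (w j)) :
    ContainsInduced (cycleGraph (p+qc)) G := by
  set n := p + qc with hn
  refine ⟨fun i => if h : i.val < p then u i.val else w (i.val - p), ?_, ?_⟩
  · intro x y hxy
    by_cases hx : x.val < p <;> by_cases hy : y.val < p <;>
        simp only [hx, hy, dif_pos, dif_neg, not_lt] at hxy
    · exact Fin.ext (hui hx hy hxy)
    · exact absurd hxy (huw hx (by have := y.isLt; omega))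
    · exact absurd hxy.symm (huw hy (by have := x.isLt; omega))
    · have hx' : ¬ x.val < p := hx
      have hy' : ¬ y.val < p := hy
      have := hwi (i := x.val - p) (j := y.val - p)
        (by have := x.isLt; omega) (by have := y.isLt; omega) hxy
      exact Fin.ext (by omega)
  · intro x y
    rw [cycle_adj_iff (by omega)]
    have hxn : x.val < n := x.isLt
    have hyn : y.val < n := y.isLt
    constructor
    · rintro (h | h | h | h)
      · -- y = x + 1
        by_cases hx : x.val < p
        · by_cases hy : y.val < p
          · simp only [hx, hy, dif_pos]
            have := hua (i := x.val) (by omega)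
            rwa [h] at this
          · -- x = p-1, y = p
            simp only [hx, dif_pos, dif_neg hy]
            have hx1 : x.val = p - 1 := by omega
            have hy1 : y.val - p = 0 := by omega
            rw [hx1, hy1]; exact he1
        · -- both ≥ p
          have hy : ¬ y.val < p := by omega
          simp only [dif_neg hx, dif_neg hy]
          have := hwa (i := x.val - p) (by omega)
          have hh : x.val - p + 1 = y.val - p := by omega
          rwa [hh] at this
      · by_cases hy : y.val < p
        · by_cases hx : x.val < p
          · simp only [hx, hy, dif_pos]
            exact ((h ▸ hua (i := y.val) (by omega)) : G.Adj (u y.val) (u x.val)).symm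
          · simp only [dif_neg hx, hy, dif_pos]
            have hy1 : y.val = p - 1 := by omega
            have hx1 : x.val - p = 0 := by omega
            rw [hx1, hy1]; exact he1.symm
        · have hx : ¬ x.val < p := by omega
          simp only [dif_neg hx, dif_neg hy]
          have := hwa (i := y.val - p) (by omega)
          have hh : y.val - p + 1 = x.val - p := by omega
          rw [hh] at this; exact this.symm
      · -- x = 0, y = n-1
        obtain ⟨hx0, hy0⟩ := h
        have hy : ¬ y.val < p := by omega
        simp only [hx0, dif_neg hy, Nat.lt_of_lt_of_le Nat.zero_lt_one hp, dif_pos]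
        have : y.val - p = qc - 1 := by omega
        rw [this]
        exact he2.symm
      · obtain ⟨hy0, hx0⟩ := h
        have hx : ¬ x.val < p := by omega
        simp only [hy0, dif_neg hx, Nat.lt_of_lt_of_le Nat.zero_lt_one hp, dif_pos]
        have : x.val - p = qc - 1 := by omega
        rw [this]
        exact he2
    · -- reverse: contrapositive
      intro hadj
      by_contra hnot
      push_neg at hnot
      obtain ⟨h1, h2, h3, h4⟩ := hnot
      by_cases hx : x.val < p <;> by_cases hy : y.val < p <;>
          simp only [hx, hy, dif_pos, dif_neg, not_lt] at hadj
      · rcases Nat.lt_trichotomy x.val y.val with hl | hl | hl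
        · exact hun hy (by omega) hadj
        · exact G.loopless.irrefl _ (by rw [show x.val = y.val from hl] at hadj; exact hadj)
        · exact hun hx (by omega) hadj.symm
      · -- x in u, y in w
        exact hcross hx (j := y.val - p) (by omega) (by omega) (by omega) hadj
      · exact hcross hy (j := x.val - p) (by omega) (by omega) (by omega) hadj.symm
      · have hx' : ¬ x.val < p := hx
        rcases Nat.lt_trichotomy x.val y.val with hl | hl | hl
        · exact hwn (i := x.val - p) (j := y.val - p) (by omega) (by omega) hadj
        · exact G.loopless.irrefl _ (by rw [show x.val - p = y.val - p by omega] at hadj; exact hadj)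
        · exact hwn (i := y.val - p) (j := x.val - p) (by omega) (by omega) hadj.symm
    


variable {V : Type*} {G : SimpleGraph V}

/-- An induced path of length `k`, encoded as a function `ℕ → V`. -/
def IndPath (G : SimpleGraph V) (k : ℕ) (f : ℕ → V) : Prop :=
  (∀ ⦃i j⦄, i ≤ k → j ≤ k → f i = f j → i = j) ∧
  (∀ ⦃i⦄, i < k → G.Adj (f i) (f (i+1))) ∧
  (∀ ⦃i j⦄, j ≤ k → i + 1 < j → ¬ G.Adj (f i) (f j))

lemma IndPath.mono {k k' : ℕ} {f : ℕ → V} (h : IndPath G k f) (hk : k' ≤ k) :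
    IndPath G k' f :=
  ⟨fun _ _ hi hj => h.1 (hi.trans hk) (hj.trans hk),
   fun _ hi => h.2.1 (lt_of_lt_of_le hi hk),
   fun _ _ hj hij => h.2.2 (hj.trans hk) hij⟩

lemma IndPath.shift {k : ℕ} {f : ℕ → V} (h : IndPath G k f) (j : ℕ) (hj : j ≤ k) :
    IndPath G (k - j) (fun i => f (j + i)) := by
  refine ⟨fun a b ha hb hab => ?_, fun a ha => ?_, fun a b hb hab => ?_⟩
  · have := h.1 (i := j + a) (j := j + b) (by omega) (by omega) hab
    omega
  · have := h.2.1 (i := j + a) (by omega)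
    rwa [show j + a + 1 = j + (a+1) by omega] at this
  · exact h.2.2 (i := j + a) (j := j + b) (by omega) (by omega)

lemma reach_of_chain {k : ℕ} {f : ℕ → V} (hadj : ∀ ⦃i⦄, i < k → G.Adj (f i) (f (i+1))) :
    ∀ ⦃j⦄, j ≤ k → G.Reachable (f 0) (f j) := by
  intro j
  induction j with
  | zero => intro _; exact Reachable.refl _
  | succ m ih => intro hm; exact (ih (by omega)).trans (hadj (by omega : m < k)).reachable

lemma dist_triangle_reach {x y z : V} (h1 : G.Reachable x y) (h2 : G.Reachable y z) :
    G.dist x z ≤ G.dist x y + G.dist y z := by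
  obtain ⟨p, hp⟩ := h1.exists_walk_length_eq_dist
  obtain ⟨q, hq⟩ := h2.exists_walk_length_eq_dist
  calc G.dist x z ≤ (p.append q).length := dist_le _
    _ = _ := by rw [Walk.length_append, hp, hq]

lemma dist_le_add_one {x y z : V} (hr : G.Reachable x y) (h : G.Adj y z) :
    G.dist x z ≤ G.dist x y + 1 := by
  obtain ⟨p, hp⟩ := hr.exists_walk_length_eq_dist
  calc G.dist x z ≤ (p.append (Walk.cons h Walk.nil)).length := dist_le _
    _ = G.dist x y + 1 := by rw [Walk.length_append, hp]; rfl

lemma dist_le_one_add {x y z : V} (h : G.Adj x y) (hr : G.Reachable y z) :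
    G.dist x z ≤ G.dist y z + 1 := by
  obtain ⟨p, hp⟩ := hr.exists_walk_length_eq_dist
  calc G.dist x z ≤ (Walk.cons h p).length := dist_le _
    _ = G.dist y z + 1 := by rw [Walk.length_cons, hp]

/-- Vertices of a geodesic, with exact distance bookkeeping. -/
lemma exists_shortest {u v : V} (h : G.Reachable u v) :
    ∃ q : ℕ → V, q 0 = u ∧ q (G.dist u v) = v ∧
      (∀ ⦃i⦄, i < G.dist u v → G.Adj (q i) (q (i+1))) ∧
      (∀ ⦃i⦄, i ≤ G.dist u v → G.dist u (q i) = i ∧ G.dist (q i) v = G.dist u v - i) := by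
  obtain ⟨p, hp⟩ := h.exists_walk_length_eq_dist
  set d := G.dist u v with hd
  have hadj : ∀ ⦃i⦄, i < d → G.Adj (p.getVert i) (p.getVert (i+1)) := by
    intro i hi; exact p.adj_getVert_succ (by omega)
  have hreach : ∀ i, G.Reachable u (p.getVert i) := by
    intro i
    induction i with
    | zero => rw [p.getVert_zero]
    | succ m ih =>
      by_cases hm : m < p.length
      · exact ih.trans (p.adj_getVert_succ hm).reachable
      · have e : p.getVert (m+1) = p.getVert m := by
          rw [p.getVert_of_length_le (by omega), p.getVert_of_length_le (by omega)]
        rw [e]; exact ih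
  have hgd : p.getVert d = v := by rw [← hp]; exact p.getVert_length
  have hup : ∀ i, G.dist u (p.getVert i) ≤ i := by
    intro i
    induction i with
    | zero => rw [p.getVert_zero]; simp
    | succ m ih =>
      by_cases hm : m < p.length
      · have := dist_le_add_one (hreach m) (p.adj_getVert_succ hm)
        omega
      · have e : p.getVert (m+1) = p.getVert m := by
          rw [p.getVert_of_length_le (by omega), p.getVert_of_length_le (by omega)]
        rw [e]; omega
  have hdown : ∀ m i, i + m = d → G.dist (p.getVert i) v ≤ m := by
    intro m
    induction m with
    | zero =>
      intro i hi
      rw [show i = d by omega, hgd]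
      simp
    | succ mm ih =>
      intro i hi
      have h1 : G.Adj (p.getVert i) (p.getVert (i+1)) := hadj (by omega)
      have h2 : G.Reachable (p.getVert (i+1)) v := (hreach (i+1)).symm.trans h
      have := dist_le_one_add h1 h2
      have := ih (i+1) (by omega)
      omega
  refine ⟨fun i => p.getVert i, p.getVert_zero, hgd, hadj, ?_⟩
  intro i hi
  simp only []
  have h1 : G.dist u (p.getVert i) ≤ i := hup i
  have h2 : G.dist (p.getVert i) v ≤ d - i := hdown (d - i) i (by omega)
  have h3 : d ≤ G.dist u (p.getVert i) + G.dist (p.getVert i) v :=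
    dist_triangle_reach (hreach i) ((hreach i).symm.trans h)
  constructor <;> omega


/-- A minimal counterexample configuration: an induced path `f` of length `k`
joined to a geodesic `q` of length `d` between its endpoints, `d < k ≤ d+2`. -/
structure Cfg (G : SimpleGraph V) where
  k : ℕ
  d : ℕ
  f : ℕ → V
  q : ℕ → V
  hd : 2 ≤ d
  hk : k = d + 1 ∨ k = d + 2
  hq0 : q 0 = f 0
  hqd : q d = f k
  hfa : ∀ ⦃i⦄, i < k → G.Adj (f i) (f (i+1))
  hqa : ∀ ⦃i⦄, i < d → G.Adj (q i) (q (i+1))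
  hfn : ∀ ⦃i j⦄, j ≤ k → i + 1 < j → ¬ G.Adj (f i) (f j)
  hqn : ∀ ⦃i j⦄, j ≤ d → i + 1 < j → ¬ G.Adj (q i) (q j)
  hfi : ∀ ⦃i j⦄, i ≤ k → j ≤ k → f i = f j → i = j
  hqi : ∀ ⦃i j⦄, i ≤ d → j ≤ d → q i = q j → i = j
  hdisj : ∀ ⦃i j⦄, 1 ≤ i → i ≤ d - 1 → j ≤ k → f j ≠ q i
  hchar : ∀ ⦃i j⦄, 1 ≤ i → i ≤ d - 1 → j ≤ k → G.Adj (f j) (q i) →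
    (j = 0 ∧ i = 1) ∨ (j = k ∧ i = d - 1) ∨ j = i + 1 ∨ (j = i ∧ k = d + 1)

namespace Cfg

variable (c : Cfg G)

def ch (i : ℕ) : Prop := G.Adj (c.f i) (c.q i) ∨ G.Adj (c.f (i+1)) (c.q i)

lemma hdk : c.d + 1 ≤ c.k := by rcases c.hk with h | h <;> omega

lemma hkd : c.k ≤ c.d + 2 := by rcases c.hk with h | h <;> omega

lemma A0q1 : G.Adj (c.f 0) (c.q 1) := by
  rw [← c.hq0]; exact c.hqa (by have := c.hd; omega : 0 < c.d)

lemma Akqd1 : G.Adj (c.f c.k) (c.q (c.d - 1)) := by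
  rw [← c.hqd]
  have h := c.hqa (show c.d - 1 < c.d by have := c.hd; omega)
  rw [show c.d - 1 + 1 = c.d by have := c.hd; omega] at h
  exact h.symm

lemma no_v (hk2 : c.k = c.d + 2) ⦃i : ℕ⦄ (h1 : 1 ≤ i) (h2 : i ≤ c.d - 1) :
    ¬ G.Adj (c.f i) (c.q i) := by
  intro hA
  have := c.hchar h1 h2 (by have := c.hdk; omega) hA
  have := c.hd
  omega

/-- Reversing both paths yields another configuration. -/
def flip : Cfg G where
  k := c.k
  d := c.d
  f := fun j => c.f (c.k - j)
  q := fun i => c.q (c.d - i)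
  hd := c.hd
  hk := c.hk
  hq0 := by simpa using c.hqd
  hqd := by simp [c.hq0]
  hfa := by
    intro i hi
    have h := c.hfa (show c.k - i - 1 < c.k by omega)
    rw [show c.k - i - 1 + 1 = c.k - i by omega] at h
    beta_reduce
    rw [show c.k - (i+1) = c.k - i - 1 by omega]
    exact h.symm
  hqa := by
    intro i hi
    have h := c.hqa (show c.d - i - 1 < c.d by omega)
    rw [show c.d - i - 1 + 1 = c.d - i by omega] at h
    beta_reduce
    rw [show c.d - (i+1) = c.d - i - 1 by omega]
    exact h.symm
  hfn := by
    intro i j hj hij hA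
    exact c.hfn (show c.k - i ≤ c.k by omega) (show c.k - j + 1 < c.k - i by omega) hA.symm
  hqn := by
    intro i j hj hij hA
    exact c.hqn (show c.d - i ≤ c.d by omega) (show c.d - j + 1 < c.d - i by omega) hA.symm
  hfi := by
    intro i j hi hj hA
    have := c.hfi (show c.k - i ≤ c.k by omega) (show c.k - j ≤ c.k by omega) hA
    omega
  hqi := by
    intro i j hi hj hA
    have := c.hqi (show c.d - i ≤ c.d by omega) (show c.d - j ≤ c.d by omega) hA
    omega
  hdisj := by
    intro i j h1 h2 hj
    have := c.hd
    exact c.hdisj (show 1 ≤ c.d - i by omega) (show c.d - i ≤ c.d - 1 by omega)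
      (show c.k - j ≤ c.k by omega)
  hchar := by
    intro i j h1 h2 hj hA
    have hd := c.hd
    have hdk := c.hdk
    have := c.hchar (show 1 ≤ c.d - i by omega) (show c.d - i ≤ c.d - 1 by omega)
      (show c.k - j ≤ c.k by omega) hA
    rcases c.hk with hk | hk <;> omega

end Cfg

namespace Cfg

variable (c : Cfg G)

lemma exists_ch (h4 : ∀ n : ℕ, 5 ≤ n → ¬ ContainsInduced (SimpleGraph.cycleGraph n) G) :
    ∃ i, 1 ≤ i ∧ i ≤ c.d - 1 ∧ c.ch i := by
  by_contra hex
  push_neg at hex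
  have hd := c.hd
  have hdk := c.hdk
  have hkd := c.hkd
  refine h4 ((c.k + 1) + (c.d - 1)) (by omega) ?_
  refine hole_glue (c.k + 1) (c.d - 1) (by omega) (by omega) (by omega)
    c.f (fun s => c.q (c.d - 1 - s)) ?_ ?_ ?_ ?_ ?_ ?_ ?_ ?_ ?_ ?_
  · intro i j hi hj hij
    exact c.hfi (by omega) (by omega) hij
  · intro i j hi hj hij
    have := c.hqi (i := c.d - 1 - i) (j := c.d - 1 - j) (by omega) (by omega) hij
    omega
  · intro i j hi hj hij
    exact c.hdisj (by omega) (by omega) (by omega) hij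
  · intro i hi
    exact c.hfa (by omega)
  · intro i hi
    have h := c.hqa (show c.d - 1 - i - 1 < c.d by omega)
    rw [show c.d - 1 - i - 1 + 1 = c.d - 1 - i by omega] at h
    beta_reduce
    rw [show c.d - 1 - (i + 1) = c.d - 1 - i - 1 by omega]
    exact h.symm
  · intro i j hj hij
    exact c.hfn (by omega) (by omega)
  · intro i j hj hij hA
    exact c.hqn (show c.d - 1 - i ≤ c.d by omega) (show c.d - 1 - j + 1 < c.d - 1 - i by omega)
      hA.symm
  · beta_reduce
    rw [show c.k + 1 - 1 = c.k by omega, show c.d - 1 - 0 = c.d - 1 by omega]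
    exact c.Akqd1
  · beta_reduce
    rw [show c.d - 1 - (c.d - 1 - 1) = 1 by omega]
    exact c.A0q1.symm
  · intro i s hi hs hne1 hne2 hA
    beta_reduce at hA
    have hchar := c.hchar (show 1 ≤ c.d - 1 - s by omega) (show c.d - 1 - s ≤ c.d - 1 by omega)
      (show i ≤ c.k by omega) hA
    rcases hchar with ⟨h1, h2⟩ | ⟨h1, h2⟩ | h1 | ⟨h1, h2⟩
    · exact hne2 ⟨h1, by omega⟩
    · exact hne1 ⟨by omega, by omega⟩
    · exact hex (c.d - 1 - s) (by omega) (by omega) (Or.inr (h1 ▸ hA))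
    · exact hex (c.d - 1 - s) (by omega) (by omega) (Or.inl (h1 ▸ hA))

lemma ch_one (h4 : ∀ n : ℕ, 5 ≤ n → ¬ ContainsInduced (SimpleGraph.cycleGraph n) G)
    (hex : ∃ i, 1 ≤ i ∧ i ≤ c.d - 1 ∧ c.ch i) : c.ch 1 := by
  classical
  by_contra hch1
  have hd := c.hd
  have hdk := c.hdk
  set m := Nat.find hex with hm
  obtain ⟨hm1, hmd, hmch⟩ := Nat.find_spec hex
  have hmin : ∀ i, i < m → ¬ (1 ≤ i ∧ i ≤ c.d - 1 ∧ c.ch i) := fun i hi => Nat.find_min hex hi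
  have hm2 : 2 ≤ m := by
    rcases Nat.lt_or_ge m 2 with h | h
    · have hm01 : m = 1 := by omega
      exact absurd (hm01 ▸ hmch) hch1
    · exact h
  by_cases hv : G.Adj (c.f m) (c.q m)
  case pos =>
    refine h4 ((m + 1) + m) (by omega) (hole_glue (m+1) m (by omega) (by omega) (by omega)
      c.f (fun s => c.q (m - s)) ?_ ?_ ?_ ?_ ?_ ?_ ?_ ?_ ?_ ?_)
    · intro i j hi hj hij; exact c.hfi (by omega) (by omega) hij
    · intro i j hi hj hij
      have := c.hqi (i := m - i) (j := m - j) (by omega) (by omega) hij; omega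
    · intro i j hi hj; exact c.hdisj (by omega) (by omega) (by omega)
    · intro i hi; exact c.hfa (by omega)
    · intro i hi
      have h := c.hqa (show m - i - 1 < c.d by omega)
      rw [show m - i - 1 + 1 = m - i by omega] at h
      beta_reduce
      rw [show m - (i + 1) = m - i - 1 by omega]
      exact h.symm
    · intro i j hj hij; exact c.hfn (by omega) (by omega)
    · intro i j hj hij hA
      exact c.hqn (show m - i ≤ c.d by omega) (show m - j + 1 < m - i by omega) hA.symm
    · beta_reduce
      rw [show m + 1 - 1 = m by omega, show m - 0 = m by omega]; exact hv
    · beta_reduce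
      rw [show m - (m - 1) = 1 by omega]; exact c.A0q1.symm
    · intro i s hi hs hne1 hne2 hA
      beta_reduce at hA
      have hchar := c.hchar (show 1 ≤ m - s by omega) (show m - s ≤ c.d - 1 by omega)
        (show i ≤ c.k by omega) hA
      rcases hchar with ⟨h1, h2⟩ | ⟨h1, h2⟩ | h1 | ⟨h1, h2⟩
      · exact hne2 ⟨h1, by omega⟩
      · omega
      · -- i = (m-s)+1 : the chord g_{m-s}, so ch (m-s); minimality forces s = 0, i = m+1 > m : imposs
        have hch : c.ch (m - s) := Or.inr (h1 ▸ hA)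
        have := hmin (m - s)
        have hsm : ¬ (m - s < m) := fun hlt => this hlt ⟨by omega, by omega, hch⟩
        omega
      · have hch : c.ch (m - s) := Or.inl (h1 ▸ hA)
        have := hmin (m - s)
        have hsm : ¬ (m - s < m) := fun hlt => this hlt ⟨by omega, by omega, hch⟩
        -- s = 0, i = m = p - 1 : exception 1
        exact hne1 ⟨by omega, by omega⟩
  case neg =>
    have hg : G.Adj (c.f (m+1)) (c.q m) := hmch.resolve_left hv
    refine h4 ((m + 2) + m) (by omega) (hole_glue (m+2) m (by omega) (by omega) (by omega)
      c.f (fun s => c.q (m - s)) ?_ ?_ ?_ ?_ ?_ ?_ ?_ ?_ ?_ ?_)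
    · intro i j hi hj hij; exact c.hfi (by omega) (by omega) hij
    · intro i j hi hj hij
      have := c.hqi (i := m - i) (j := m - j) (by omega) (by omega) hij; omega
    · intro i j hi hj; exact c.hdisj (by omega) (by omega) (by omega)
    · intro i hi; exact c.hfa (by omega)
    · intro i hi
      have h := c.hqa (show m - i - 1 < c.d by omega)
      rw [show m - i - 1 + 1 = m - i by omega] at h
      beta_reduce
      rw [show m - (i + 1) = m - i - 1 by omega]
      exact h.symm
    · intro i j hj hij; exact c.hfn (by omega) (by omega)
    · intro i j hj hij hA
      exact c.hqn (show m - i ≤ c.d by omega) (show m - j + 1 < m - i by omega) hA.symm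
    · beta_reduce
      rw [show m + 2 - 1 = m + 1 by omega, show m - 0 = m by omega]; exact hg
    · beta_reduce
      rw [show m - (m - 1) = 1 by omega]; exact c.A0q1.symm
    · intro i s hi hs hne1 hne2 hA
      beta_reduce at hA
      have hchar := c.hchar (show 1 ≤ m - s by omega) (show m - s ≤ c.d - 1 by omega)
        (show i ≤ c.k by omega) hA
      rcases hchar with ⟨h1, h2⟩ | ⟨h1, h2⟩ | h1 | ⟨h1, h2⟩
      · exact hne2 ⟨h1, by omega⟩
      · omega
      · have hch : c.ch (m - s) := Or.inr (h1 ▸ hA)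
        have := hmin (m - s)
        have hsm : ¬ (m - s < m) := fun hlt => this hlt ⟨by omega, by omega, hch⟩
        exact hne1 ⟨by omega, by omega⟩
      · have hch : c.ch (m - s) := Or.inl (h1 ▸ hA)
        have := hmin (m - s)
        have hsm : ¬ (m - s < m) := fun hlt => this hlt ⟨by omega, by omega, hch⟩
        -- s = 0 and i = m, i.e. the chord v_m, contradicting hv
        have hs0 : s = 0 := by omega
        have him : i = m := by omega
        rw [him, hs0, show m - 0 = m from rfl] at hA
        exact hv hA

end Cfg

namespace Cfg

variable (c : Cfg G)

lemma ch_two (h4 : ∀ n : ℕ, 5 ≤ n → ¬ ContainsInduced (SimpleGraph.cycleGraph n) G)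
    (hch1 : c.ch 1) (hd3 : 3 ≤ c.d)
    (hex : ∃ i, 2 ≤ i ∧ i ≤ c.d - 1 ∧ c.ch i) : c.ch 2 := by
  classical
  by_contra hch2
  have hd := c.hd
  have hdk := c.hdk
  set m := Nat.find hex with hm
  obtain ⟨hm1, hmd, hmch⟩ := Nat.find_spec hex
  have hmin : ∀ i, i < m → ¬ (2 ≤ i ∧ i ≤ c.d - 1 ∧ c.ch i) := fun i hi => Nat.find_min hex hi
  have hm3 : 3 ≤ m := by
    rcases Nat.lt_or_ge m 3 with h | h
    · have hm01 : m = 2 := by omega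
      exact absurd (hm01 ▸ hmch) hch2
    · exact h
  -- left attachment point of q 1
  have ha : ∃ a, (a = 1 ∨ a = 2) ∧ G.Adj (c.f a) (c.q 1) ∧
      (a = 2 ∨ ¬ G.Adj (c.f 2) (c.q 1)) := by
    by_cases hg1 : G.Adj (c.f 2) (c.q 1)
    · exact ⟨2, Or.inr rfl, hg1, Or.inl rfl⟩
    · exact ⟨1, Or.inl rfl, hch1.resolve_right hg1, Or.inr hg1⟩
  obtain ⟨a, ha12, haA, hamax⟩ := ha
  -- right attachment point of q m
  have hb : ∃ b, (b = m ∨ b = m + 1) ∧ G.Adj (c.f b) (c.q m) ∧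
      (b = m ∨ ¬ G.Adj (c.f m) (c.q m)) := by
    by_cases hv : G.Adj (c.f m) (c.q m)
    · exact ⟨m, Or.inl rfl, hv, Or.inl rfl⟩
    · exact ⟨m + 1, Or.inr rfl, hmch.resolve_left hv, Or.inr hv⟩
  obtain ⟨b, hb12, hbA, hbmin⟩ := hb
  refine h4 ((b - a + 1) + m) (by omega) (hole_glue (b - a + 1) m (by omega) (by omega)
    (by omega) (fun r => c.f (a + r)) (fun s => c.q (m - s)) ?_ ?_ ?_ ?_ ?_ ?_ ?_ ?_ ?_ ?_)
  · intro i j hi hj hij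
    have := c.hfi (i := a + i) (j := a + j) (by omega) (by omega) hij; omega
  · intro i j hi hj hij
    have := c.hqi (i := m - i) (j := m - j) (by omega) (by omega) hij; omega
  · intro i j hi hj; exact c.hdisj (by omega) (by omega) (by omega)
  · intro i hi
    have h := c.hfa (show a + i < c.k by omega)
    beta_reduce
    rwa [show a + i + 1 = a + (i + 1) by omega] at h
  · intro i hi
    have h := c.hqa (show m - i - 1 < c.d by omega)
    rw [show m - i - 1 + 1 = m - i by omega] at h
    beta_reduce
    rw [show m - (i + 1) = m - i - 1 by omega]
    exact h.symm
  · intro i j hj hij; exact c.hfn (by omega) (by omega)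
  · intro i j hj hij hA
    exact c.hqn (show m - i ≤ c.d by omega) (show m - j + 1 < m - i by omega) hA.symm
  · beta_reduce
    rw [show b - a + 1 - 1 = b - a by omega, show a + (b - a) = b by omega,
      show m - 0 = m from rfl]
    exact hbA
  · beta_reduce
    rw [show m - (m - 1) = 1 by omega, show a + 0 = a from rfl]
    exact haA.symm
  · intro r s hr hs hne1 hne2 hA
    beta_reduce at hA
    have hchar := c.hchar (show 1 ≤ m - s by omega) (show m - s ≤ c.d - 1 by omega)
      (show a + r ≤ c.k by omega) hA
    rcases hchar with ⟨h1, h2⟩ | ⟨h1, h2⟩ | h1 | ⟨h1, h2⟩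
    · omega
    · omega
    · -- a + r = (m - s) + 1 : chord g_{m-s}
      have hch : c.ch (m - s) := Or.inr (h1 ▸ hA)
      by_cases hsm : m - s < m
      · -- then m - s ≤ 1, i.e. s = m - 1 and m - s = 1, so a + r = 2 : then a = 2, r = 0
        have h2' : ¬ (2 ≤ m - s) := fun hge => hmin (m - s) hsm ⟨hge, by omega, hch⟩
        have hms1 : m - s = 1 := by omega
        -- chord f 2 ~ q 1 exists, so a = 2 by hamax
        have ha2 : a = 2 := by
          rcases hamax with h | h
          · exact h
          · exfalso
            refine h ?_
            have e1 : a + r = 2 := by omega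
            rw [e1, hms1] at hA
            exact hA
        exact hne2 ⟨by omega, by omega⟩
      · -- s = 0 : a + r = m + 1, so b = m + 1 and r = p - 1
        exact hne1 ⟨by omega, by omega⟩
    · -- a + r = m - s (a v-chord)
      have hch : c.ch (m - s) := Or.inl (h1 ▸ hA)
      by_cases hsm : m - s < m
      · have h2' : ¬ (2 ≤ m - s) := fun hge => hmin (m - s) hsm ⟨hge, by omega, hch⟩
        have hms1 : m - s = 1 := by omega
        -- a + r = 1 : needs a = 1, r = 0; then exception 2 unless a = 2
        have har : a + r = 1 := by omega
        have ha1 : a = 1 := by omega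
        exact hne2 ⟨by omega, by omega⟩
      · -- s = 0 and a + r = m : contradicts hbmin unless b = m
        have hs0 : s = 0 := by omega
        have hbm : b = m := by
          rcases hbmin with h | h
          · exact h
          · exfalso
            rw [show a + r = m - s from h1, hs0, show m - 0 = m from rfl] at hA
            exact h hA
        exact hne1 ⟨by omega, by omega⟩

end Cfg

lemma exists_shortest' {u v : V} (h : G.Reachable u v) :
    ∃ q : ℕ → V, q 0 = u ∧ q (G.dist u v) = v ∧ IndPath G (G.dist u v) q ∧
      (∀ ⦃i⦄, i ≤ G.dist u v → G.dist u (q i) = i ∧ G.dist (q i) v = G.dist u v - i) := by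
  obtain ⟨q, hq0, hqd, hqa, hE⟩ := exists_shortest h
  set d := G.dist u v with hd
  have hqreach : ∀ i, i ≤ d → G.Reachable u (q i) := by
    intro i hi
    have := reach_of_chain (k := d) (f := q) hqa hi
    rwa [hq0] at this
  refine ⟨q, hq0, hqd, ⟨?_, hqa, ?_⟩, hE⟩
  · intro i j hi hj hij
    have e1 := (hE hi).1
    have e2 := (hE hj).1
    rw [hij] at e1
    omega
  · intro i j hj hij hA
    have e1 := (hE (show i ≤ d by omega)).1
    have e3 := (hE hj).1
    have t1 : G.dist u (q j) ≤ i + 1 := by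
      have := dist_le_add_one (hqreach i (by omega)) hA
      omega
    omega

lemma endgame_v2 (h1 : ¬ ContainsInduced house G) (h3 : ¬ ContainsInduced gem G)
    (x0 x1 x2 y z : V)
    (A01 : G.Adj x0 x1) (A12 : G.Adj x1 x2) (A0y : G.Adj x0 y) (Ayz : G.Adj y z)
    (A2z : G.Adj x2 z)
    (hch : G.Adj x1 y ∨ G.Adj x2 y)
    (N02 : ¬ G.Adj x0 x2) (N0z : ¬ G.Adj x0 z) (N1z : ¬ G.Adj x1 z) : False := by
  by_cases hv : G.Adj x1 y
  · by_cases hg : G.Adj x2 y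
    · exact h3 (contains_gem x0 x1 x2 z y A01 A12 A2z A0y hv hg Ayz.symm N02 N0z N1z)
    · exact h1 (contains_house x1 y z x2 x0 hv Ayz A2z.symm A12 A01.symm A0y.symm
        N1z (fun h => hg h.symm) (fun h => N0z h.symm) (fun h => N02 h.symm))
  · have hg : G.Adj x2 y := hch.resolve_left hv
    exact h1 (contains_house x2 y x0 x1 z hg A0y.symm A01 A12.symm A2z Ayz
      (fun h => N02 h.symm) (fun h => hv h.symm) N0z N1z)

theorem key (h1 : ¬ ContainsInduced house G) (h2 : ¬ ContainsInduced domino G)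
    (h3 : ¬ ContainsInduced gem G)
    (h4 : ∀ n : ℕ, 5 ≤ n → ¬ ContainsInduced (SimpleGraph.cycleGraph n) G) :
    ∀ k (f : ℕ → V), IndPath G k f → G.dist (f 0) (f k) = k := by
  intro k
  induction k using Nat.strong_induction_on with
  | _ k IH =>
  intro f hf
  rcases Nat.lt_or_ge k 2 with hk2 | hk2
  · interval_cases k
    · exact dist_self
    · exact dist_eq_one_iff_adj.mpr (hf.2.1 (by omega))
  -- k ≥ 2 ; suppose dist < k, derive a contradiction
  by_contra hne
  obtain ⟨hfi, hfa, hfn⟩ := hf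
  have Dpre : ∀ ⦃j⦄, j < k → G.dist (f 0) (f j) = j :=
    fun j hj => IH j hj f (IndPath.mono ⟨hfi, hfa, hfn⟩ (le_of_lt hj))
  have Dsuf : ∀ ⦃j⦄, 1 ≤ j → j ≤ k → G.dist (f j) (f k) = k - j := by
    intro j hj1 hjk
    have h := IH (k - j) (by omega) _ (IndPath.shift ⟨hfi, hfa, hfn⟩ j hjk)
    beta_reduce at h
    rwa [show j + 0 = j by omega, show j + (k - j) = k by omega] at h
  have hreach : ∀ ⦃j⦄, j ≤ k → G.Reachable (f 0) (f j) := fun j hj => reach_of_chain hfa hj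
  set d := G.dist (f 0) (f k) with hdd
  have hdk1 : d ≤ k - 1 := by
    have e := Dpre (show k - 1 < k by omega)
    have t := dist_le_add_one (hreach (show k - 1 ≤ k by omega))
      (show G.Adj (f (k-1)) (f k) by
        have hx := hfa (show k - 1 < k by omega)
        rwa [show k - 1 + 1 = k by omega] at hx)
    omega
  have hdk2 : k ≤ d + 2 := by
    have e := Dpre (show k - 1 < k by omega)
    have t := dist_le_add_one (x := f 0) (y := f k) (z := f (k-1)) (hreach (le_refl k))
      (show G.Adj (f k) (f (k-1)) by
        have hx := hfa (show k - 1 < k by omega)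
        rw [show k - 1 + 1 = k by omega] at hx
        exact hx.symm)
    omega
  have hd2 : 2 ≤ d := by
    have hd0 : d ≠ 0 := by
      intro h0
      have heq : f 0 = f k :=
        ((hreach (le_refl k)).dist_eq_zero_iff).mp (by rw [← hdd]; exact h0)
      have := hfi (show (0:ℕ) ≤ k by omega) (le_refl k) heq
      omega
    have hd1 : d ≠ 1 := by
      intro h0
      have hA : G.Adj (f 0) (f k) := dist_eq_one_iff_adj.mp (by rw [← hdd]; exact h0)
      exact hfn (le_refl k) (by omega) hA
    omega
  obtain ⟨q, hq0, hqd, hqind, hE⟩ := exists_shortest' (hreach (le_refl k))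
  rw [← hdd] at hqd hqind hE
  obtain ⟨hqi, hqa, hqn⟩ := hqind
  have hqreach : ∀ ⦃i⦄, i ≤ d → G.Reachable (f 0) (q i) := by
    intro i hi
    have := reach_of_chain hqa hi
    rwa [hq0] at this
  -- the endpoints of q are disjoint from the interior of f and vice versa
  have hdisj : ∀ ⦃i j⦄, 1 ≤ i → i ≤ d - 1 → j ≤ k → f j ≠ q i := by
    intro i j hi1 hid hjk heq
    rcases Nat.eq_zero_or_pos j with hj0 | hjpos
    · subst hj0
      rw [← hq0] at heq
      have := hqi (show (0:ℕ) ≤ d by omega) (show i ≤ d by omega) heq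
      omega
    · by_cases hjk' : j = k
      · subst hjk'
        rw [← hqd] at heq
        have := hqi (le_refl d) (show i ≤ d by omega) heq
        omega
      · have e1 := (hE (show i ≤ d by omega)).1
        have e2 := (hE (show i ≤ d by omega)).2
        rw [← heq] at e1 e2
        have t1 := Dpre (show j < k by omega)
        have t2 := Dsuf hjpos (by omega)
        omega
  -- characterization of the possible chords between f and q
  have hchar : ∀ ⦃i j⦄, 1 ≤ i → i ≤ d - 1 → j ≤ k → G.Adj (f j) (q i) →
      (j = 0 ∧ i = 1) ∨ (j = k ∧ i = d - 1) ∨ j = i + 1 ∨ (j = i ∧ k = d + 1) := by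
    intro i j hi1 hid hjk hA
    rcases Nat.eq_zero_or_pos j with hj0 | hjpos
    · subst hj0
      rw [← hq0] at hA
      by_cases hi2 : 2 ≤ i
      · exact absurd hA (hqn (show i ≤ d by omega) (by omega))
      · exact Or.inl ⟨rfl, by omega⟩
    by_cases hjk' : j = k
    · subst hjk'
      rw [← hqd] at hA
      by_cases hi2 : i + 1 < d
      · exact absurd hA.symm (hqn (le_refl d) hi2)
      · exact Or.inr (Or.inl ⟨rfl, by omega⟩)
    have e1 := (hE (show i ≤ d by omega)).1
    have e2 := (hE (show i ≤ d by omega)).2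
    have ej1 := Dpre (show j < k by omega)
    have ej2 := Dsuf hjpos (by omega)
    have t1 : G.dist (f 0) (f j) ≤ i + 1 := by
      have := dist_le_add_one (hqreach (show i ≤ d by omega)) hA.symm
      omega
    have t2 : G.dist (f 0) (q i) ≤ j + 1 := by
      have := dist_le_add_one (hreach (show j ≤ k by omega)) hA
      omega
    have t3 : G.dist (f j) (f k) ≤ G.dist (q i) (f k) + 1 :=
      dist_le_one_add hA ((hqreach (show i ≤ d by omega)).symm.trans (hreach (le_refl k)))
    have t4 : G.dist (q i) (f k) ≤ G.dist (f j) (f k) + 1 :=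
      dist_le_one_add hA.symm ((hreach (show j ≤ k by omega)).symm.trans (hreach (le_refl k)))
    omega
  -- package the configuration
  let c : Cfg G := ⟨k, d, f, q, hd2, by omega, hq0, hqd, hfa, hqa, hfn, hqn, hfi, hqi,
    hdisj, hchar⟩
  have Nfq : ∀ ⦃i j⦄, 1 ≤ i → i ≤ d - 1 → j ≤ k →
      ¬(j = 0 ∧ i = 1) → ¬(j = k ∧ i = d - 1) → j ≠ i + 1 → ¬(j = i ∧ k = d + 1) →
      ¬ G.Adj (f j) (q i) := by
    intro i j p1 p2 p3 n1 n2 n3 n4 hA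
    rcases hchar p1 p2 p3 hA with h | h | h | h
    · exact n1 h
    · exact n2 h
    · exact n3 h
    · exact n4 h
  have hch1 : G.Adj (f 1) (q 1) ∨ G.Adj (f 2) (q 1) := c.ch_one h4 (c.exists_ch h4)
  have hchd : G.Adj (f (d-1)) (q (d-1)) ∨ G.Adj (f ((d-1)+1)) (q (d-1)) := by
    have hx : G.Adj (f (k-1)) (q (d-1)) ∨ G.Adj (f (k-2)) (q (d-1)) :=
      (c.flip).ch_one h4 ((c.flip).exists_ch h4)
    rcases (show k = d + 1 ∨ k = d + 2 by omega) with hk' | hk'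
    · rcases hx with h | h
      · right; rwa [show k - 1 = (d-1)+1 by omega] at h
      · left; rwa [show k - 2 = d - 1 by omega] at h
    · rcases hx with h | h
      · exfalso
        have := hchar (show 1 ≤ d-1 by omega) (le_refl (d-1)) (show k-1 ≤ k by omega) h
        omega
      · right; rwa [show k - 2 = (d-1)+1 by omega] at h
  have A0q1 : G.Adj (f 0) (q 1) := by
    rw [← hq0]; exact hqa (by omega)
  rcases (show k = d + 1 ∨ k = d + 2 by omega) with hk' | hk'
  · -- k = d + 1
    by_cases hd3 : 3 ≤ d
    · have hch2 : G.Adj (f 2) (q 2) ∨ G.Adj (f 3) (q 2) :=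
        c.ch_two h4 hch1 hd3 ⟨d - 1, by omega, le_refl _, hchd⟩
      by_cases hv2 : G.Adj (f 2) (q 2)
      · exact endgame_v2 h1 h3 (f 0) (f 1) (f 2) (q 1) (q 2)
          (hfa (by omega)) (hfa (by omega)) A0q1 (hqa (by omega)) hv2 hch1
          (hfn (by omega) (by omega))
          (by rw [← hq0]; exact hqn (by omega) (by omega))
          (Nfq (by omega) (by omega) (by omega) (by omega) (by omega) (by omega) (by omega))
      · have hg2 : G.Adj (f 3) (q 2) := hch2.resolve_left hv2
        by_cases hg1 : G.Adj (f 2) (q 1)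
        · by_cases hv1 : G.Adj (f 1) (q 1)
          · -- house on (f2, q1, q2, f3, f1)
            refine h1 (contains_house (f 2) (q 1) (q 2) (f 3) (f 1)
              hg1 (hqa (by omega)) hg2.symm (hfa (by omega)) (hfa (by omega)).symm hv1.symm
              hv2 ?_ ?_ ?_)
            · intro h
              exact Nfq (show 1 ≤ 1 by omega) (by omega) (by omega) (by omega) (by omega)
                (by omega) (by omega) h.symm
            · intro h
              exact Nfq (show 1 ≤ 2 by omega) (by omega) (by omega) (by omega) (by omega)
                (by omega) (by omega) h.symm
            · intro h
              exact hfn (show 3 ≤ k by omega) (by omega) h.symm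
          · -- domino on (f1, f2, q1, f0, f3, q2)
            refine h2 (contains_domino (f 1) (f 2) (q 1) (f 0) (f 3) (q 2)
              (hfa (by omega)) hg1 A0q1.symm (hfa (by omega)).symm (hfa (by omega)) hg2
              (hqa (by omega)) hv1 (hfn (by omega) (by omega)) ?_
              (fun h => hfn (by omega) (by omega) h.symm) hv2 ?_
              (hfn (by omega) (by omega)) ?_)
            · exact Nfq (show 1 ≤ 2 by omega) (by omega) (by omega) (by omega) (by omega)
                (by omega) (by omega)
            · intro h
              exact Nfq (show 1 ≤ 1 by omega) (by omega) (by omega) (by omega) (by omega)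
                (by omega) (by omega) h.symm
            · rw [← hq0]; exact hqn (by omega) (by omega)
        · have hv1 : G.Adj (f 1) (q 1) := hch1.resolve_right hg1
          -- C5 hole on f1 f2 f3 q2 q1
          refine h4 5 (by omega) ?_
          have hole := hole_glue (G := G) 3 2 (by omega) (by omega) (by omega)
            (fun r => f (1 + r)) (fun s => q (2 - s)) ?_ ?_ ?_ ?_ ?_ ?_ ?_ ?_ ?_ ?_
          · exact hole
          · intro i j hi hj hij
            have := hfi (show 1 + i ≤ k by omega) (show 1 + j ≤ k by omega) hij
            omega
          · intro i j hi hj hij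
            have := hqi (show 2 - i ≤ d by omega) (show 2 - j ≤ d by omega) hij
            omega
          · intro i j hi hj
            exact hdisj (by omega) (by omega) (by omega)
          · intro i hi
            have h := hfa (show 1 + i < k by omega)
            beta_reduce
            rwa [show 1 + i + 1 = 1 + (i + 1) by omega] at h
          · intro i hi
            have hi0 : i = 0 := by omega
            subst hi0
            beta_reduce
            exact (hqa (by omega)).symm
          · intro i j hj hij
            have hi0 : i = 0 := by omega
            have hj2 : j = 2 := by omega
            subst hi0; subst hj2
            beta_reduce
            exact hfn (by omega) (by omega)
          · intro i j hj hij
            omega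
          · beta_reduce
            exact hg2
          · beta_reduce
            exact hv1.symm
          · intro i j hi hj hne1 hne2 hA
            beta_reduce at hA
            interval_cases i <;> interval_cases j
            · exact Nfq (show 1 ≤ 2 by omega) (by omega) (by omega) (by omega) (by omega)
                (by omega) (by omega) hA
            · omega
            · exact hv2 hA
            · exact hg1 hA
            · omega
            · exact Nfq (show 1 ≤ 1 by omega) (by omega) (by omega) (by omega) (by omega)
                (by omega) (by omega) hA
    · -- d = 2, k = 3
      have hd2' : d = 2 := by omega
      have hq2k : q 2 = f k := by rw [hd2'] at hqd; exact hqd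
      refine endgame_v2 h1 h3 (f 0) (f 1) (f 2) (q 1) (f k)
        (hfa (by omega)) (hfa (by omega)) A0q1 ?_ ?_ hch1
        (hfn (by omega) (by omega)) (hfn (by omega) (by omega)) (hfn (by omega) (by omega))
      · rw [← hq2k]; exact hqa (by omega)
      · rw [show k = 2 + 1 by omega]; exact hfa (by omega)
  · -- k = d + 2
    have hnv : ∀ ⦃i⦄, 1 ≤ i → i ≤ d - 1 → ¬ G.Adj (f i) (q i) := by
      intro i p1 p2 hA
      have := hchar p1 p2 (by omega) hA
      omega
    have hg1 : G.Adj (f 2) (q 1) := hch1.resolve_left (hnv (by omega) (by omega))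
    have hf3q2 : G.Adj (f 3) (q 2) := by
      by_cases hd3 : 3 ≤ d
      · have hch2 : G.Adj (f 2) (q 2) ∨ G.Adj (f 3) (q 2) :=
          c.ch_two h4 hch1 hd3 ⟨d - 1, by omega, le_refl _, hchd⟩
        exact hch2.resolve_left (hnv (by omega) (by omega))
      · have hd2' : d = 2 := by omega
        have hq2k : q 2 = f k := by rw [hd2'] at hqd; exact hqd
        rw [hq2k, show k = 3 + 1 by omega]
        exact hfa (by omega)
    obtain ⟨N1q2, N2q2, N0q2⟩ :
        ¬ G.Adj (f 1) (q 2) ∧ ¬ G.Adj (f 2) (q 2) ∧ ¬ G.Adj (f 0) (q 2) := by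
      by_cases hd3 : 3 ≤ d
      · refine ⟨?_, ?_, ?_⟩
        · exact Nfq (show 1 ≤ 2 by omega) (by omega) (by omega) (by omega) (by omega)
            (by omega) (by omega)
        · exact Nfq (show 1 ≤ 2 by omega) (by omega) (by omega) (by omega) (by omega)
            (by omega) (by omega)
        · rw [← hq0]; exact hqn (by omega) (by omega)
      · have hd2' : d = 2 := by omega
        have hq2k : q 2 = f k := by rw [hd2'] at hqd; exact hqd
        rw [hq2k]
        exact ⟨hfn (le_refl k) (by omega), hfn (le_refl k) (by omega),
          hfn (le_refl k) (by omega)⟩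
    refine h2 (contains_domino (f 1) (f 2) (q 1) (f 0) (f 3) (q 2)
      (hfa (by omega)) hg1 A0q1.symm (hfa (by omega)).symm (hfa (by omega)) hf3q2
      (hqa (by omega)) (hnv (by omega) (by omega)) (hfn (by omega) (by omega)) N1q2
      (fun h => hfn (by omega) (by omega) h.symm) N2q2 ?_
      (hfn (by omega) (by omega)) N0q2)
    intro h
    exact Nfq (show 1 ≤ 1 by omega) (by omega) (by omega) (by omega) (by omega)
      (by omega) (by omega) h.symm

end HHDGAux

/-- (house, hole, domino, gem)-free ⟹ distance-hereditary. -/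
theorem HHDGFree_implies_distanceHereditary {V : Type*} [Fintype V] (G : SimpleGraph V)
    (h1 : ¬ ContainsInduced house G) (h2 : ¬ ContainsInduced domino G)
    (h3 : ¬ ContainsInduced gem G)
    (h4 : ∀ n : ℕ, 5 ≤ n → ¬ ContainsInduced (SimpleGraph.cycleGraph n) G) :
    DistanceHereditary G := by
  intro S hconn u v
  obtain ⟨g, hg0, hgd, ⟨hgi, hga, hgn⟩, hgE⟩ :=
    HHDGAux.exists_shortest' (G := G.induce S) (hconn.preconnected u v)
  have hIP : HHDGAux.IndPath G ((G.induce S).dist u v) (fun i => ((g i) : V)) := by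
    refine ⟨?_, ?_, ?_⟩
    · intro i j hi hj hij
      exact hgi hi hj (Subtype.coe_injective hij)
    · intro i hi
      exact hga hi
    · intro i j hj hij hA
      exact hgn hj hij hA
  have hk := HHDGAux.key h1 h2 h3 h4 _ _ hIP
  beta_reduce at hk
  rw [hg0, hgd] at hk
  exact hk.symm
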